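/- For every sequent Γ▷Δ there is a finite set A of atomic sequents equivalent to Γ▷Δ in ⊢_GB, i.e. {Γ▷Δ} ⊢_GB s for every s ∈ A and A ⊢_GB Γ▷Δ. Moreover, for every finite set T of sequents there is a formula φ such that T and the single sequent ∅▷φ are equivalent in ⊢_GB, i.e. T ⊢_GB ∅▷φ and {∅▷φ} ⊢_GB s for every s ∈ T. -/

import Mathlib

/-- Propositional formulas: atoms, conjunction, disjunction, De Morgan negation, ⊤, ⊥. -/
inductive Fm : Type where
  | atom : ℕ → Fm
  | conj : Fm → Fm → Fm
  | disj : Fm → Fm → Fm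
  | neg  : Fm → Fm
  | top  : Fm
  | bot  : Fm
deriving DecidableEq

/-- A sequent is a pair of finite multisets of formulas. -/
abbrev Sqnt : Type := Multiset Fm × Multiset Fm

/-- A formula is an atom. -/
def isAtom (φ : Fm) : Prop := ∃ i, φ = Fm.atom i

/-- A sequent is atomic if every formula in it is an atom. -/
def AtomicSeq (s : Sqnt) : Prop := (∀ φ ∈ s.1, isAtom φ) ∧ (∀ φ ∈ s.2, isAtom φ)

/-- Derivability of a sequent from a set `S` of sequents in a super-Belnap calculus.
The calculus always contains the common structural rules of Weakening and Contraction.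
The `Prop` flags switch further rules on and off:
`i` = the introduction rules (incl. the axioms `∅▷⊤` and `⊥▷∅`),
`e` = the elimination rules, `d` = Identity, `c` = Cut, `l` = Limited Cut. -/
inductive Drv (i e d c l : Prop) (S : Set Sqnt) : Sqnt → Prop where
  | prem {s} : s ∈ S → Drv i e d c l S s
  -- common structural rules: Weakening and Contraction
  | wkL (φ : Fm) {Γ Δ} : Drv i e d c l S (Γ, Δ) → Drv i e d c l S (φ ::ₘ Γ, Δ)
  | wkR (φ : Fm) {Γ Δ} : Drv i e d c l S (Γ, Δ) → Drv i e d c l S (Γ, φ ::ₘ Δ)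
  | ctrL {φ Γ Δ} : Drv i e d c l S (φ ::ₘ φ ::ₘ Γ, Δ) → Drv i e d c l S (φ ::ₘ Γ, Δ)
  | ctrR {φ Γ Δ} : Drv i e d c l S (Γ, φ ::ₘ φ ::ₘ Δ) → Drv i e d c l S (Γ, φ ::ₘ Δ)
  -- introduction rules
  | andR {φ ψ Γ Δ} : i → Drv i e d c l S (Γ, φ ::ₘ Δ) → Drv i e d c l S (Γ, ψ ::ₘ Δ) →
      Drv i e d c l S (Γ, Fm.conj φ ψ ::ₘ Δ)
  | andL {φ ψ Γ Δ} : i → Drv i e d c l S (φ ::ₘ ψ ::ₘ Γ, Δ) →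
      Drv i e d c l S (Fm.conj φ ψ ::ₘ Γ, Δ)
  | orL {φ ψ Γ Δ} : i → Drv i e d c l S (φ ::ₘ Γ, Δ) → Drv i e d c l S (ψ ::ₘ Γ, Δ) →
      Drv i e d c l S (Fm.disj φ ψ ::ₘ Γ, Δ)
  | orR {φ ψ Γ Δ} : i → Drv i e d c l S (Γ, φ ::ₘ ψ ::ₘ Δ) →
      Drv i e d c l S (Γ, Fm.disj φ ψ ::ₘ Δ)
  | negR {φ Γ Δ} : i → Drv i e d c l S (φ ::ₘ Γ, Δ) → Drv i e d c l S (Γ, Fm.neg φ ::ₘ Δ)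
  | negL {φ Γ Δ} : i → Drv i e d c l S (Γ, φ ::ₘ Δ) → Drv i e d c l S (Fm.neg φ ::ₘ Γ, Δ)
  | topR : i → Drv i e d c l S (0, {Fm.top})
  | botL : i → Drv i e d c l S ({Fm.bot}, 0)
  -- elimination rules
  | andRE1 {φ ψ Γ Δ} : e → Drv i e d c l S (Γ, Fm.conj φ ψ ::ₘ Δ) → Drv i e d c l S (Γ, φ ::ₘ Δ)
  | andRE2 {φ ψ Γ Δ} : e → Drv i e d c l S (Γ, Fm.conj φ ψ ::ₘ Δ) → Drv i e d c l S (Γ, ψ ::ₘ Δ)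
  | andLE {φ ψ Γ Δ} : e → Drv i e d c l S (Fm.conj φ ψ ::ₘ Γ, Δ) →
      Drv i e d c l S (φ ::ₘ ψ ::ₘ Γ, Δ)
  | orLE1 {φ ψ Γ Δ} : e → Drv i e d c l S (Fm.disj φ ψ ::ₘ Γ, Δ) → Drv i e d c l S (φ ::ₘ Γ, Δ)
  | orLE2 {φ ψ Γ Δ} : e → Drv i e d c l S (Fm.disj φ ψ ::ₘ Γ, Δ) → Drv i e d c l S (ψ ::ₘ Γ, Δ)
  | orRE {φ ψ Γ Δ} : e → Drv i e d c l S (Γ, Fm.disj φ ψ ::ₘ Δ) →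
      Drv i e d c l S (Γ, φ ::ₘ ψ ::ₘ Δ)
  | negRE {φ Γ Δ} : e → Drv i e d c l S (Γ, Fm.neg φ ::ₘ Δ) → Drv i e d c l S (φ ::ₘ Γ, Δ)
  | negLE {φ Γ Δ} : e → Drv i e d c l S (Fm.neg φ ::ₘ Γ, Δ) → Drv i e d c l S (Γ, φ ::ₘ Δ)
  | topLE {Γ Δ} : e → Drv i e d c l S (Fm.top ::ₘ Γ, Δ) → Drv i e d c l S (Γ, Δ)
  | botRE {Γ Δ} : e → Drv i e d c l S (Γ, Fm.bot ::ₘ Δ) → Drv i e d c l S (Γ, Δ)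
  -- Identity
  | ident (φ : Fm) : d → Drv i e d c l S ({φ}, {φ})
  -- Cut
  | cut {φ Γ Γ' Δ Δ'} : c → Drv i e d c l S (Γ, φ ::ₘ Δ) → Drv i e d c l S (φ ::ₘ Γ', Δ') →
      Drv i e d c l S (Γ + Γ', Δ + Δ')
  -- Limited Cut
  | lcut1 {φ Γ Δ} : l → Drv i e d c l S (0, {φ}) → Drv i e d c l S (φ ::ₘ Γ, Δ) →
      Drv i e d c l S (Γ, Δ)
  | lcut2 {φ Γ Δ} : l → Drv i e d c l S (Γ, φ ::ₘ Δ) → Drv i e d c l S ({φ}, 0) →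
      Drv i e d c l S (Γ, Δ)

/-- Derivability in the calculus GB: introduction rules, elimination rules and the
common structural rules (no Identity, no Cut). -/
abbrev GB : Set Sqnt → Sqnt → Prop := Drv True True False False False


section Aux
open Fm

theorem drvTrans {i e d c l : Prop} {S S' : Set Sqnt} {s : Sqnt} (h : Drv i e d c l S s)
    (hs : ∀ u ∈ S, Drv i e d c l S' u) : Drv i e d c l S' s := by
  induction h with
  | prem h => exact hs _ h
  | wkL φ _ ih => exact .wkL φ ih
  | wkR φ _ ih => exact .wkR φ ih
  | ctrL _ ih => exact .ctrL ih
  | ctrR _ ih => exact .ctrR ih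
  | andR hi _ _ ih1 ih2 => exact .andR hi ih1 ih2
  | andL hi _ ih => exact .andL hi ih
  | orL hi _ _ ih1 ih2 => exact .orL hi ih1 ih2
  | orR hi _ ih => exact .orR hi ih
  | negR hi _ ih => exact .negR hi ih
  | negL hi _ ih => exact .negL hi ih
  | topR hi => exact .topR hi
  | botL hi => exact .botL hi
  | andRE1 he _ ih => exact .andRE1 he ih
  | andRE2 he _ ih => exact .andRE2 he ih
  | andLE he _ ih => exact .andLE he ih
  | orLE1 he _ ih => exact .orLE1 he ih
  | orLE2 he _ ih => exact .orLE2 he ih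
  | orRE he _ ih => exact .orRE he ih
  | negRE he _ ih => exact .negRE he ih
  | negLE he _ ih => exact .negLE he ih
  | topLE he _ ih => exact .topLE he ih
  | botRE he _ ih => exact .botRE he ih
  | ident φ hd => exact .ident φ hd
  | cut hc _ _ ih1 ih2 => exact .cut hc ih1 ih2
  | lcut1 hl _ _ ih1 ih2 => exact .lcut1 hl ih1 ih2
  | lcut2 hl _ _ ih1 ih2 => exact .lcut2 hl ih1 ih2

theorem drvMono {i e d c l : Prop} {S S' : Set Sqnt} {s : Sqnt} (h : Drv i e d c l S s)
    (hss : S ⊆ S') : Drv i e d c l S' s :=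
  drvTrans h (fun _ hu => .prem (hss hu))

theorem wkLs {i e d c l : Prop} {S : Set Sqnt} (Γ₀ : Multiset Fm) {Γ Δ : Multiset Fm}
    (h : Drv i e d c l S (Γ, Δ)) : Drv i e d c l S (Γ₀ + Γ, Δ) := by
  induction Γ₀ using Multiset.induction with
  | empty => simpa using h
  | cons a s ih => rw [Multiset.cons_add]; exact .wkL a ih

theorem wkRs {i e d c l : Prop} {S : Set Sqnt} (Δ₀ : Multiset Fm) {Γ Δ : Multiset Fm}
    (h : Drv i e d c l S (Γ, Δ)) : Drv i e d c l S (Γ, Δ₀ + Δ) := by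
  induction Δ₀ using Multiset.induction with
  | empty => simpa using h
  | cons a s ih => rw [Multiset.cons_add]; exact .wkR a ih

theorem addConsSwap (a b : Multiset Fm) (x : Fm) : a + (x ::ₘ b) = x ::ₘ (a + b) := by
  rw [← Multiset.singleton_add, ← Multiset.singleton_add, add_left_comm]

/-- Complexity of a formula. -/
def fmC : Fm → ℕ
  | .atom _ => 0
  | .conj φ ψ => fmC φ + fmC ψ + 1
  | .disj φ ψ => fmC φ + fmC ψ + 1
  | .neg φ => fmC φ + 1
  | .top => 1
  | .bot => 1

/-- Complexity of a sequent. -/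
def sC (Γ Δ : Multiset Fm) : ℕ := (Γ.map fmC).sum + (Δ.map fmC).sum

theorem part1aux : ∀ (n : ℕ) (Γ Δ : Multiset Fm), sC Γ Δ < n →
    ∃ A : Finset Sqnt, (∀ s ∈ A, AtomicSeq s) ∧ (∀ s ∈ A, GB {(Γ, Δ)} s) ∧ GB (↑A) (Γ, Δ) := by
  intro n
  induction n with
  | zero => intro Γ Δ h; omega
  | succ n ih =>
    intro Γ Δ hn
    by_cases hat : AtomicSeq (Γ, Δ)
    · refine ⟨{(Γ, Δ)}, ?_, ?_, ?_⟩
      · intro s hs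
        rw [Finset.mem_singleton] at hs; subst hs; exact hat
      · intro s hs
        rw [Finset.mem_singleton] at hs; subst hs; exact .prem rfl
      · exact .prem (by simp)
    · rw [AtomicSeq, not_and_or] at hat
      rcases hat with hat | hat
      · -- a non-atom on the left
        push_neg at hat
        obtain ⟨φ, hmem, hφ⟩ := hat
        obtain ⟨Γ', rfl⟩ : ∃ Γ', Γ = φ ::ₘ Γ' := ⟨Γ.erase φ, (Multiset.cons_erase hmem).symm⟩
        cases φ with
        | atom i => exact absurd ⟨i, rfl⟩ hφ
        | conj φ ψ =>
          have hlt : sC (φ ::ₘ ψ ::ₘ Γ') Δ < n := by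
            simp only [sC, Multiset.map_cons, Multiset.sum_cons, fmC] at hn ⊢; omega
          obtain ⟨A, h1, h2, h3⟩ := ih _ _ hlt
          refine ⟨A, h1, ?_, .andL trivial h3⟩
          intro s hs
          refine drvTrans (h2 s hs) ?_
          rintro u rfl
          exact .andLE trivial (.prem rfl)
        | disj φ ψ =>
          have hlt1 : sC (φ ::ₘ Γ') Δ < n := by
            simp only [sC, Multiset.map_cons, Multiset.sum_cons, fmC] at hn ⊢; omega
          have hlt2 : sC (ψ ::ₘ Γ') Δ < n := by
            simp only [sC, Multiset.map_cons, Multiset.sum_cons, fmC] at hn ⊢; omega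
          obtain ⟨A₁, a1, a2, a3⟩ := ih _ _ hlt1
          obtain ⟨A₂, b1, b2, b3⟩ := ih _ _ hlt2
          refine ⟨A₁ ∪ A₂, ?_, ?_, ?_⟩
          · intro s hs
            rcases Finset.mem_union.mp hs with h | h
            exacts [a1 s h, b1 s h]
          · intro s hs
            rcases Finset.mem_union.mp hs with h | h
            · exact drvTrans (a2 s h) (by rintro u rfl; exact .orLE1 trivial (.prem rfl))
            · exact drvTrans (b2 s h) (by rintro u rfl; exact .orLE2 trivial (.prem rfl))
          · refine .orL trivial (drvMono a3 ?_) (drvMono b3 ?_) <;>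
              · intro u hu
                simp only [Finset.coe_union, Set.mem_union, Finset.mem_coe] at *
                tauto
        | neg φ =>
          have hlt : sC Γ' (φ ::ₘ Δ) < n := by
            simp only [sC, Multiset.map_cons, Multiset.sum_cons, fmC] at hn ⊢; omega
          obtain ⟨A, h1, h2, h3⟩ := ih _ _ hlt
          refine ⟨A, h1, ?_, .negL trivial h3⟩
          intro s hs
          refine drvTrans (h2 s hs) ?_
          rintro u rfl
          exact .negLE trivial (.prem rfl)
        | top =>
          have hlt : sC Γ' Δ < n := by
            simp only [sC, Multiset.map_cons, Multiset.sum_cons, fmC] at hn ⊢; omega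
          obtain ⟨A, h1, h2, h3⟩ := ih _ _ hlt
          refine ⟨A, h1, ?_, .wkL Fm.top h3⟩
          intro s hs
          refine drvTrans (h2 s hs) ?_
          rintro u rfl
          exact .topLE trivial (.prem rfl)
        | bot =>
          refine ⟨∅, by simp, by simp, ?_⟩
          have h0 : GB (↑(∅ : Finset Sqnt)) (({Fm.bot} : Multiset Fm), (0 : Multiset Fm)) :=
            .botL trivial
          have h1 := wkLs Γ' (wkRs Δ h0)
          have e1 : Γ' + ({Fm.bot} : Multiset Fm) = Fm.bot ::ₘ Γ' := by
            rw [add_comm, Multiset.singleton_add]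
          rw [e1, add_zero] at h1
          exact h1
      · -- a non-atom on the right
        push_neg at hat
        obtain ⟨φ, hmem, hφ⟩ := hat
        obtain ⟨Δ', rfl⟩ : ∃ Δ', Δ = φ ::ₘ Δ' := ⟨Δ.erase φ, (Multiset.cons_erase hmem).symm⟩
        cases φ with
        | atom i => exact absurd ⟨i, rfl⟩ hφ
        | conj φ ψ =>
          have hlt1 : sC Γ (φ ::ₘ Δ') < n := by
            simp only [sC, Multiset.map_cons, Multiset.sum_cons, fmC] at hn ⊢; omega
          have hlt2 : sC Γ (ψ ::ₘ Δ') < n := by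
            simp only [sC, Multiset.map_cons, Multiset.sum_cons, fmC] at hn ⊢; omega
          obtain ⟨A₁, a1, a2, a3⟩ := ih _ _ hlt1
          obtain ⟨A₂, b1, b2, b3⟩ := ih _ _ hlt2
          refine ⟨A₁ ∪ A₂, ?_, ?_, ?_⟩
          · intro s hs
            rcases Finset.mem_union.mp hs with h | h
            exacts [a1 s h, b1 s h]
          · intro s hs
            rcases Finset.mem_union.mp hs with h | h
            · exact drvTrans (a2 s h) (by rintro u rfl; exact .andRE1 trivial (.prem rfl))
            · exact drvTrans (b2 s h) (by rintro u rfl; exact .andRE2 trivial (.prem rfl))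
          · refine .andR trivial (drvMono a3 ?_) (drvMono b3 ?_) <;>
              · intro u hu
                simp only [Finset.coe_union, Set.mem_union, Finset.mem_coe] at *
                tauto
        | disj φ ψ =>
          have hlt : sC Γ (φ ::ₘ ψ ::ₘ Δ') < n := by
            simp only [sC, Multiset.map_cons, Multiset.sum_cons, fmC] at hn ⊢; omega
          obtain ⟨A, h1, h2, h3⟩ := ih _ _ hlt
          refine ⟨A, h1, ?_, .orR trivial h3⟩
          intro s hs
          refine drvTrans (h2 s hs) ?_
          rintro u rfl
          exact .orRE trivial (.prem rfl)
        | neg φ =>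
          have hlt : sC (φ ::ₘ Γ) Δ' < n := by
            simp only [sC, Multiset.map_cons, Multiset.sum_cons, fmC] at hn ⊢; omega
          obtain ⟨A, h1, h2, h3⟩ := ih _ _ hlt
          refine ⟨A, h1, ?_, .negR trivial h3⟩
          intro s hs
          refine drvTrans (h2 s hs) ?_
          rintro u rfl
          exact .negRE trivial (.prem rfl)
        | top =>
          refine ⟨∅, by simp, by simp, ?_⟩
          have h0 : GB (↑(∅ : Finset Sqnt)) ((0 : Multiset Fm), ({Fm.top} : Multiset Fm)) :=
            .topR trivial
          have h1 := wkLs Γ (wkRs Δ' h0)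
          have e1 : Δ' + ({Fm.top} : Multiset Fm) = Fm.top ::ₘ Δ' := by
            rw [add_comm, Multiset.singleton_add]
          rw [e1, add_zero] at h1
          exact h1
        | bot =>
          have hlt : sC Γ Δ' < n := by
            simp only [sC, Multiset.map_cons, Multiset.sum_cons, fmC] at hn ⊢; omega
          obtain ⟨A, h1, h2, h3⟩ := ih _ _ hlt
          refine ⟨A, h1, ?_, .wkR Fm.bot h3⟩
          intro s hs
          refine drvTrans (h2 s hs) ?_
          rintro u rfl
          exact .botRE trivial (.prem rfl)

/-- Disjunction of a list of formulas. -/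
def disjAll (L : List Fm) : Fm := L.foldr Fm.disj Fm.bot

/-- Conjunction of a list of formulas. -/
def conjAll (L : List Fm) : Fm := L.foldr Fm.conj Fm.top

/-- The characteristic formula of a sequent. -/
noncomputable def phiOf (s : Sqnt) : Fm := disjAll (s.1.toList.map Fm.neg ++ s.2.toList)

theorem negsR {S : Set Sqnt} : ∀ (L : List Fm) (Δ : Multiset Fm), GB S (↑L, Δ) →
    GB S ((0 : Multiset Fm), ↑(L.map Fm.neg) + Δ) := by
  intro L
  induction L with
  | nil => intro Δ h; simpa using h
  | cons γ L ih =>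
    intro Δ h
    have h1 : GB S (↑L, Fm.neg γ ::ₘ Δ) := .negR trivial (by simpa using h)
    have h2 := ih (Fm.neg γ ::ₘ Δ) h1
    have e : (↑(L.map Fm.neg) : Multiset Fm) + (Fm.neg γ ::ₘ Δ) =
        ↑((γ :: L).map Fm.neg) + Δ := by
      simp [addConsSwap, Multiset.cons_add, ← Multiset.cons_coe]
    rwa [e] at h2

theorem negsRE {S : Set Sqnt} : ∀ (L : List Fm) (Γ Δ : Multiset Fm),
    GB S (Γ, ↑(L.map Fm.neg) + Δ) → GB S (↑L + Γ, Δ) := by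
  intro L
  induction L with
  | nil => intro Γ Δ h; simpa using h
  | cons γ L ih =>
    intro Γ Δ h
    have e : (↑((γ :: L).map Fm.neg) : Multiset Fm) + Δ =
        ↑(L.map Fm.neg) + (Fm.neg γ ::ₘ Δ) := by
      simp [addConsSwap, Multiset.cons_add, ← Multiset.cons_coe]
    rw [e] at h
    have h2 := ih Γ (Fm.neg γ ::ₘ Δ) h
    have h3 : GB S (γ ::ₘ (↑L + Γ), Δ) := .negRE trivial h2
    have e2 : (↑(γ :: L) : Multiset Fm) + Γ = γ ::ₘ (↑L + Γ) := by
      simp [Multiset.cons_add, ← Multiset.cons_coe]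
    rwa [e2]

theorem disjR {S : Set Sqnt} : ∀ (K : List Fm) (Γ Δ : Multiset Fm),
    GB S (Γ, ↑K + Δ) → GB S (Γ, disjAll K ::ₘ Δ) := by
  intro K
  induction K with
  | nil => intro Γ Δ h; exact .wkR Fm.bot (by simpa [Multiset.coe_nil] using h)
  | cons a K ih =>
    intro Γ Δ h
    have e : (↑(a :: K) : Multiset Fm) + Δ = ↑K + (a ::ₘ Δ) := by
      simp [addConsSwap, Multiset.cons_add, ← Multiset.cons_coe]
    rw [e] at h
    have h2 := ih Γ (a ::ₘ Δ) h
    rw [Multiset.cons_swap] at h2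
    exact .orR trivial h2

theorem disjRE {S : Set Sqnt} : ∀ (K : List Fm) (Γ Δ : Multiset Fm),
    GB S (Γ, disjAll K ::ₘ Δ) → GB S (Γ, ↑K + Δ) := by
  intro K
  induction K with
  | nil => intro Γ Δ h; simpa [Multiset.coe_nil] using Drv.botRE trivial h
  | cons a K ih =>
    intro Γ Δ h
    have h1 : GB S (Γ, a ::ₘ disjAll K ::ₘ Δ) := .orRE trivial h
    rw [Multiset.cons_swap] at h1
    have h2 := ih Γ (a ::ₘ Δ) h1
    have e : (↑(a :: K) : Multiset Fm) + Δ = ↑K + (a ::ₘ Δ) := by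
      simp [addConsSwap, Multiset.cons_add, ← Multiset.cons_coe]
    rwa [e]

theorem conjR {S : Set Sqnt} : ∀ K : List Fm, (∀ ψ ∈ K, GB S ((0 : Multiset Fm), ({ψ} : Multiset Fm))) →
    GB S ((0 : Multiset Fm), ({conjAll K} : Multiset Fm)) := by
  intro K
  induction K with
  | nil => intro _; exact .topR trivial
  | cons a K ih =>
    intro h
    exact .andR trivial (h a (by simp)) (ih (fun ψ hψ => h ψ (by simp [hψ])))

theorem conjE {S : Set Sqnt} : ∀ K : List Fm, ∀ ψ ∈ K,
    GB S ((0 : Multiset Fm), ({conjAll K} : Multiset Fm)) →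
    GB S ((0 : Multiset Fm), ({ψ} : Multiset Fm)) := by
  intro K
  induction K with
  | nil => intro ψ hψ; simp at hψ
  | cons a K ih =>
    intro ψ hψ h
    rcases List.mem_cons.mp hψ with rfl | hψ
    · exact .andRE1 trivial h
    · exact ih ψ hψ (.andRE2 trivial h)

theorem seqToFm (s : Sqnt) : GB {s} ((0 : Multiset Fm), ({phiOf s} : Multiset Fm)) := by
  obtain ⟨Γ, Δ⟩ := s
  have h0 : GB {(Γ, Δ)} ((↑Γ.toList : Multiset Fm), Δ) := by
    rw [Multiset.coe_toList]; exact .prem rfl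
  have h1 := negsR Γ.toList Δ h0
  have h2 : GB {(Γ, Δ)} ((0 : Multiset Fm), ↑(Γ.toList.map Fm.neg ++ Δ.toList) + (0 : Multiset Fm)) := by
    simpa [Multiset.coe_toList, ← Multiset.coe_add] using h1
  have h3 := disjR _ _ _ h2
  simpa [phiOf] using h3

theorem fmToSeq (s : Sqnt) : GB {((0 : Multiset Fm), ({phiOf s} : Multiset Fm))} s := by
  obtain ⟨Γ, Δ⟩ := s
  have h0 : GB {((0 : Multiset Fm), ({phiOf (Γ, Δ)} : Multiset Fm))}
      ((0 : Multiset Fm), disjAll (Γ.toList.map Fm.neg ++ Δ.toList) ::ₘ 0) := .prem rfl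
  have h1 := disjRE _ _ _ h0
  have h2 : GB {((0 : Multiset Fm), ({phiOf (Γ, Δ)} : Multiset Fm))}
      ((0 : Multiset Fm), ↑(Γ.toList.map Fm.neg) + Δ) := by
    simpa [Multiset.coe_toList, ← Multiset.coe_add] using h1
  have h3 := negsRE Γ.toList _ _ h2
  simpa [Multiset.coe_toList] using h3

end Aux

/-- Every sequent is equivalent in ⊢_GB to a finite set of atomic sequents, and every
finite set of sequents is equivalent in ⊢_GB to a single sequent of the form ∅▷φ. -/
theorem stmt2 :
    (∀ Γ Δ : Multiset Fm, ∃ A : Finset Sqnt,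
      (∀ s ∈ A, AtomicSeq s) ∧
      (∀ s ∈ A, GB {(Γ, Δ)} s) ∧
      GB (↑A) (Γ, Δ)) ∧
    (∀ T : Finset Sqnt, ∃ φ : Fm,
      GB (↑T) ((0 : Multiset Fm), ({φ} : Multiset Fm)) ∧
      (∀ s ∈ T, GB ({((0 : Multiset Fm), ({φ} : Multiset Fm))} : Set Sqnt) s)) := by
  constructor
  · intro Γ Δ
    exact part1aux (sC Γ Δ + 1) Γ Δ (by omega)
  · intro T
    refine ⟨conjAll (T.toList.map phiOf), ?_, ?_⟩
    · apply conjR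
      intro ψ hψ
      obtain ⟨s, hs, rfl⟩ := List.mem_map.mp hψ
      refine drvMono (seqToFm s) ?_
      rintro u rfl
      exact Finset.mem_coe.mpr (Finset.mem_toList.mp hs)
    · intro s hsT
      refine drvTrans (fmToSeq s) ?_
      rintro u rfl
      exact conjE _ (phiOf s) (List.mem_map_of_mem (Finset.mem_toList.mpr hsT)) (.prem rfl)
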